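/- Let M be a 2×2 complex matrix that is not diagonalizable, and let ψ : Fin 2 × Fin 2 × Fin 2 → ℂ be the three-qubit state with coefficients ψ(i,0,k) = δ_{ik} and ψ(i,1,k) = M(i,k) (coefficient matrix (I₂ | M)). Then ψ is SLOCC-equivalent to the W state |100⟩ + |010⟩ + |001⟩. -/

import Mathlib

/-- The three-qubit W state `|100⟩ + |010⟩ + |001⟩`. -/
noncomputable def W3 : Fin 2 × Fin 2 × Fin 2 → ℂ :=
  fun x => if x = (1, 0, 0) ∨ x = (0, 1, 0) ∨ x = (0, 0, 1) then 1 else 0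

/-- A non-diagonalizable `2×2` complex matrix has vanishing discriminant. -/
lemma disc_zero_of_not_diagonalizable (a b c d : ℂ)
    (hM : ¬ ∃ P : Matrix (Fin 2) (Fin 2) ℂ, IsUnit P ∧ (P⁻¹ * !![a,b;c,d] * P).IsDiag) :
    (a - d)^2 + 4 * b * c = 0 := by
  by_contra h0
  obtain ⟨s, hs⟩ := IsAlgClosed.exists_pow_nat_eq ((a - d)^2 + 4 * b * c) (n := 2) (by norm_num)
  have hsne : s ≠ 0 := by
    intro h; rw [h] at hs; simp at hs; exact h0 hs.symm
  apply hM
  have hDdiag : (!![(a + d + s)/2, 0; 0, (a + d - s)/2] :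
      Matrix (Fin 2) (Fin 2) ℂ).IsDiag := by
    intro i j hij
    fin_cases i <;> fin_cases j <;> simp_all
  rcases em (b = 0) with hb0 | hbne
  · rcases em (c = 0) with hc0 | hcne
    · exact ⟨1, isUnit_one, by
        rw [inv_one, one_mul, mul_one]
        intro i j hij
        fin_cases i <;> fin_cases j <;> simp_all⟩
    · refine ⟨!![(a + d + s)/2 - d, (a + d - s)/2 - d; c, c], ?_, ?_⟩
      · rw [Matrix.isUnit_iff_isUnit_det, Matrix.det_fin_two_of, isUnit_iff_ne_zero]
        intro h
        apply hsne
        have : c * s = 0 := by linear_combination h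
        exact (mul_eq_zero.mp this).resolve_left hcne
      have hPdet : IsUnit (!![(a + d + s)/2 - d, (a + d - s)/2 - d; c, c] :
          Matrix (Fin 2) (Fin 2) ℂ).det := by
        rw [Matrix.det_fin_two_of, isUnit_iff_ne_zero]
        intro h
        apply hsne
        have : c * s = 0 := by linear_combination h
        exact (mul_eq_zero.mp this).resolve_left hcne
      have hMP : !![a,b;c,d] * !![(a + d + s)/2 - d, (a + d - s)/2 - d; c, c] =
          !![(a + d + s)/2 - d, (a + d - s)/2 - d; c, c] *
            !![(a + d + s)/2, 0; 0, (a + d - s)/2] := by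
        ext i j
        fin_cases i <;> fin_cases j <;>
          simp [Matrix.mul_apply, Fin.sum_univ_two]
        · linear_combination -hs/4
        · linear_combination -hs/4
        · ring
        · ring
      rw [mul_assoc, hMP, ← mul_assoc, Matrix.nonsing_inv_mul _ hPdet, one_mul]
      exact hDdiag
  · refine ⟨!![b, b; (a + d + s)/2 - a, (a + d - s)/2 - a], ?_, ?_⟩
    · rw [Matrix.isUnit_iff_isUnit_det, Matrix.det_fin_two_of, isUnit_iff_ne_zero]
      intro h
      apply hsne
      have : b * s = 0 := by linear_combination -h
      exact (mul_eq_zero.mp this).resolve_left hbne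
    have hPdet : IsUnit (!![b, b; (a + d + s)/2 - a, (a + d - s)/2 - a] :
        Matrix (Fin 2) (Fin 2) ℂ).det := by
      rw [Matrix.det_fin_two_of, isUnit_iff_ne_zero]
      intro h
      apply hsne
      have : b * s = 0 := by linear_combination -h
      exact (mul_eq_zero.mp this).resolve_left hbne
    have hMP : !![a,b;c,d] * !![b, b; (a + d + s)/2 - a, (a + d - s)/2 - a] =
        !![b, b; (a + d + s)/2 - a, (a + d - s)/2 - a] *
          !![(a + d + s)/2, 0; 0, (a + d - s)/2] := by
      ext i j
      fin_cases i <;> fin_cases j <;>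
        simp [Matrix.mul_apply, Fin.sum_univ_two]
      · ring
      · ring
      · linear_combination -hs/4
      · linear_combination -hs/4
    rw [mul_assoc, hMP, ← mul_assoc, Matrix.nonsing_inv_mul _ hPdet, one_mul]
    exact hDdiag

set_option maxHeartbeats 1600000 in
/-- If `M` is a non-diagonalizable `2×2` complex matrix, the three-qubit state with
coefficient matrix `(I₂ | M)` is SLOCC-equivalent to the W state. -/
theorem coeff_I_M_nondiagonalizable_slocc_equiv_w
    (M : Matrix (Fin 2) (Fin 2) ℂ)
    (hM : ¬ ∃ P : Matrix (Fin 2) (Fin 2) ℂ, IsUnit P ∧ (P⁻¹ * M * P).IsDiag)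
    (ψ : Fin 2 × Fin 2 × Fin 2 → ℂ)
    (hψ0 : ∀ i k : Fin 2, ψ (i, 0, k) = if i = k then 1 else 0)
    (hψ1 : ∀ i k : Fin 2, ψ (i, 1, k) = M i k) :
    ∃ A₁ A₂ A₃ : Matrix (Fin 2) (Fin 2) ℂ,
      IsUnit A₁ ∧ IsUnit A₂ ∧ IsUnit A₃ ∧
      ∀ i j k : Fin 2,
        W3 (i, j, k) =
          ∑ a : Fin 2, ∑ b : Fin 2, ∑ c : Fin 2,
            A₁ i a * A₂ j b * A₃ k c * ψ (a, b, c) := by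
  obtain ⟨a, b, c, d, rfl⟩ : ∃ a b c d, M = !![a, b; c, d] :=
    ⟨_, _, _, _, Matrix.eta_fin_two M⟩
  have hdisc : (a - d)^2 + 4 * b * c = 0 := disc_zero_of_not_diagonalizable a b c d hM
  have hbc : ¬ (b = 0 ∧ c = 0) := by
    rintro ⟨hb0, hc0⟩
    exact hM ⟨1, isUnit_one, by
      rw [inv_one, one_mul, mul_one]
      intro i j hij
      fin_cases i <;> fin_cases j <;> simp_all⟩
  have hA2 : IsUnit (!![1, 0; -(a+d)/2, 1] : Matrix (Fin 2) (Fin 2) ℂ) := by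
    rw [Matrix.isUnit_iff_isUnit_det, Matrix.det_fin_two_of]
    norm_num
  rcases em (b = 0) with hb0 | hb
  · have hc : c ≠ 0 := fun h => hbc ⟨hb0, h⟩
    refine ⟨!![0, 1/c; 1, 0], !![1, 0; -(a+d)/2, 1], !![1, 0; 0, c], ?_, hA2, ?_, ?_⟩
    · rw [Matrix.isUnit_iff_isUnit_det, Matrix.det_fin_two_of, isUnit_iff_ne_zero]
      simp [hc]
    · rw [Matrix.isUnit_iff_isUnit_det, Matrix.det_fin_two_of, isUnit_iff_ne_zero]
      simp [hc]
    have had : a = d := by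
      have h2 : (a - d)^2 = 0 := by rw [hb0] at hdisc; linear_combination hdisc
      have h3 := pow_eq_zero_iff (n := 2) (by norm_num) |>.mp h2
      exact sub_eq_zero.mp h3
    clear hM hbc hA2
    subst had hb0
    intro i j k
    fin_cases i <;> fin_cases j <;> fin_cases k <;>
      simp only [Fin.sum_univ_two, hψ0, hψ1, W3] <;>
      (first | rw [if_pos (by decide)] | rw [if_neg (by decide)]) <;>
      norm_num <;>
      field_simp <;>
      ring
  · refine ⟨!![1/b, 0; (a-d)/(2*b), 1], !![1, 0; -(a+d)/2, 1],
      !![0, 1; b, -(a-d)/2], ?_, hA2, ?_, ?_⟩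
    · rw [Matrix.isUnit_iff_isUnit_det, Matrix.det_fin_two_of, isUnit_iff_ne_zero]
      simp [hb]
    · rw [Matrix.isUnit_iff_isUnit_det, Matrix.det_fin_two_of, isUnit_iff_ne_zero]
      simp [hb]
    clear hM hbc hA2
    intro i j k
    fin_cases i <;> fin_cases j <;> fin_cases k <;>
      simp only [Fin.sum_univ_two, hψ0, hψ1, W3] <;>
      (first | rw [if_pos (by decide)] | rw [if_neg (by decide)]) <;>
      norm_num <;>
      field_simp <;>
      (first | ring1 | linear_combination (-2 : ℂ) * hdisc | linear_combination 2 * hdisc |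
        linear_combination -hdisc | linear_combination hdisc |
        linear_combination -hdisc/2 | linear_combination hdisc/2 |
        linear_combination b * hdisc | linear_combination -b * hdisc)
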